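/- Let G = (V,E) be a (2,2)-circuit and let X ⊊ V be a critical set. Then V \ X contains a vertex of degree 3 in G. -/

import Mathlib

/-- A graph `G` on the finite vertex type `V` is a `(2,2)`-circuit if
`|E| = 2|V| - 1` and every proper subgraph `(V',E')` with `E'` nonempty
satisfies `|E'| ≤ 2|V'| - 2`. -/
def IsCircuit22 {V : Type*} [Fintype V] (G : SimpleGraph V) : Prop :=
  G.edgeSet.ncard + 1 = 2 * Fintype.card V ∧
  ∀ H : G.Subgraph, (H.verts ≠ Set.univ ∨ H.edgeSet ≠ G.edgeSet) →
    H.edgeSet.Nonempty → H.edgeSet.ncard + 2 ≤ 2 * H.verts.ncard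

/-- The set of edges of `G` with both endpoints in `S`. -/
def inducedEdges {V : Type*} (G : SimpleGraph V) (S : Set V) : Set (Sym2 V) :=
  {e ∈ G.edgeSet | ∀ v ∈ e, v ∈ S}

/-- A vertex set `S` is critical in `G` if `i(S) = 2|S| - 2`. -/
def Critical {V : Type*} (G : SimpleGraph V) (S : Set V) : Prop :=
  (inducedEdges G S).ncard + 2 = 2 * S.ncard

def iSub {V : Type*} (G : SimpleGraph V) (S : Set V) : G.Subgraph where
  verts := S
  Adj a b := G.Adj a b ∧ a ∈ S ∧ b ∈ S
  adj_sub h := h.1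
  edge_vert h := h.2.1
  symm := ⟨fun a b h => ⟨h.1.symm, h.2.2, h.2.1⟩⟩

lemma iSub_edgeSet {V : Type*} (G : SimpleGraph V) (S : Set V) :
    (iSub G S).edgeSet = inducedEdges G S := by
  ext e
  induction e with
  | h a b =>
    simp only [SimpleGraph.Subgraph.mem_edgeSet, iSub, inducedEdges, Set.mem_setOf_eq,
      SimpleGraph.mem_edgeSet, Sym2.mem_iff]
    constructor
    · rintro ⟨h, ha, hb⟩; exact ⟨h, fun v hv => by rcases hv with rfl | rfl <;> assumption⟩
    · rintro ⟨h, hv⟩; exact ⟨h, hv a (Or.inl rfl), hv b (Or.inr rfl)⟩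

lemma incid_ncard {V : Type*} [Fintype V] [DecidableEq V] (G : SimpleGraph V)
    [DecidableRel G.Adj] (v : V) : (G.incidenceSet v).ncard = G.degree v := by
  rw [Set.ncard_eq_toFinset_card', Set.toFinset_card, SimpleGraph.card_incidenceSet_eq_degree]

lemma compl_induced {V : Type*} (G : SimpleGraph V) (v : V) :
    inducedEdges G {v}ᶜ = G.edgeSet \ G.incidenceSet v := by
  ext e
  simp only [inducedEdges, Set.mem_setOf_eq, Set.mem_diff, SimpleGraph.incidenceSet,
    Set.mem_compl_iff, Set.mem_singleton_iff]
  constructor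
  · rintro ⟨he, hv⟩; exact ⟨he, fun h => hv v h.2 rfl⟩
  · rintro ⟨he, hv⟩; exact ⟨he, fun w hw hwv => hv ⟨he, hwv ▸ hw⟩⟩

lemma degree_ge_three {V : Type*} [Fintype V] [DecidableEq V] (G : SimpleGraph V)
    [DecidableRel G.Adj] (hG : IsCircuit22 G) (v : V) : 3 ≤ G.degree v := by
  obtain ⟨hE, hsub⟩ := hG
  by_contra h
  push_neg at h
  -- edge set nonempty, so card V ≥ 2
  have hEpos : 1 ≤ G.edgeSet.ncard := by
    by_contra h0
    push_neg at h0
    interval_cases hc : G.edgeSet.ncard <;> omega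
  have hEne : G.edgeSet.Nonempty := by
    rw [← Set.ncard_pos (Set.toFinite _)] at *; omega
  have hn2 : 2 ≤ Fintype.card V := by
    obtain ⟨e, he⟩ := hEne
    induction e with
    | h a b =>
      have : a ≠ b := (G.mem_edgeSet.mp he).ne
      have : Nontrivial V := ⟨a, b, this⟩
      exact Fintype.one_lt_card
  set H := iSub G {v}ᶜ with hH
  have hHe : H.edgeSet = G.edgeSet \ G.incidenceSet v := by
    rw [hH, iSub_edgeSet, compl_induced]
  have hdiff : (G.edgeSet \ G.incidenceSet v).ncard + (G.incidenceSet v).ncard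
      = G.edgeSet.ncard := by
    rw [Set.ncard_diff_add_ncard_of_subset (G.incidenceSet_subset v)]
  rw [incid_ncard] at hdiff
  have hdeg_le : G.degree v ≤ G.edgeSet.ncard := by omega
  have hHne : H.edgeSet.Nonempty := by
    rw [← Set.ncard_pos (Set.toFinite _), hHe]
    omega
  have hverts : H.verts.ncard + 1 = Fintype.card V := by
    have := Set.ncard_add_ncard_compl ({v} : Set V)
    have h1 : ({v} : Set V).ncard = 1 := Set.ncard_singleton v
    have : H.verts = {v}ᶜ := rfl
    rw [this]
    simp only [Nat.card_eq_fintype_card] at *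
    omega
  have hproper : H.verts ≠ Set.univ ∨ H.edgeSet ≠ G.edgeSet := by
    left
    intro hu
    have : v ∈ H.verts := hu ▸ Set.mem_univ v
    exact this rfl
  have := hsub H hproper hHne
  rw [hHe] at this
  omega

/-- If `G` is a `(2,2)`-circuit and `X ⊊ V` is critical, then `V \ X` contains a
vertex of degree `3` in `G`. -/
theorem compl_critical_contains_node {V : Type*} [Fintype V] [DecidableEq V]
    (G : SimpleGraph V) [DecidableRel G.Adj] (hG : IsCircuit22 G)
    (X : Set V) (hXp : X ≠ Set.univ) (hXc : Critical G X) :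
    ∃ v : V, v ∉ X ∧ G.degree v = 3 := by
  classical
  by_contra hcon
  push_neg at hcon
  obtain ⟨hE, hsub⟩ := hG
  unfold Critical at hXc
  set Y : Set V := Xᶜ with hYdef
  have hXne : X.Nonempty := by
    rw [← Set.ncard_pos (Set.toFinite _)]
    omega
  have hYne : Y.Nonempty := by
    obtain ⟨v, hv⟩ := Set.ne_univ_iff_exists_notMem X |>.mp hXp
    exact ⟨v, hv⟩
  have hdeg4 : ∀ v ∈ Y, 4 ≤ G.degree v := fun v hv => by
    have h3 := degree_ge_three G ⟨hE, hsub⟩ v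
    have := hcon v hv
    omega
  set Yf : Finset V := Y.toFinset with hYfdef
  have hsum1 : 4 * Yf.card ≤ ∑ v ∈ Yf, G.degree v := by
    rw [mul_comm]
    have := Finset.card_nsmul_le_sum Yf (fun v => G.degree v) 4
      (fun v hv => hdeg4 v (Set.mem_toFinset.mp hv))
    simpa [smul_eq_mul] using this
  have hswap : ∑ v ∈ Yf, G.degree v = ∑ e ∈ G.edgeFinset, (Yf.filter (· ∈ e)).card := by
    calc ∑ v ∈ Yf, G.degree v = ∑ v ∈ Yf, (G.edgeFinset.filter (v ∈ ·)).card := by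
          refine Finset.sum_congr rfl fun v _ => ?_
          rw [← SimpleGraph.card_incidenceFinset_eq_degree, SimpleGraph.incidenceFinset_eq_filter]
    _ = ∑ v ∈ Yf, ∑ e ∈ G.edgeFinset, if v ∈ e then 1 else 0 := by
          simp only [Finset.card_filter]
    _ = ∑ e ∈ G.edgeFinset, ∑ v ∈ Yf, if v ∈ e then 1 else 0 := Finset.sum_comm
    _ = ∑ e ∈ G.edgeFinset, (Yf.filter (· ∈ e)).card := by
          simp only [Finset.card_filter]
  have hperedge : ∀ e ∈ G.edgeFinset, (Yf.filter (· ∈ e)).card ≤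
      (if e ∈ inducedEdges G X then 0 else 1) + (if e ∈ inducedEdges G Y then 1 else 0) := by
    intro e he
    induction e with
    | h a b =>
      rw [SimpleGraph.mem_edgeFinset] at he
      by_cases hX1 : s(a,b) ∈ inducedEdges G X
      · have hfe : Yf.filter (· ∈ (s(a,b) : Sym2 V)) = ∅ := by
          ext v
          simp only [Finset.mem_filter, Sym2.mem_iff, Finset.notMem_empty, iff_false, not_and]
          intro hv hab
          have hvY : v ∈ Y := Set.mem_toFinset.mp hv
          rcases hab with rfl | rfl
          · exact hvY (hX1.2 v (by simp))
          · exact hvY (hX1.2 v (by simp))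
        rw [if_pos hX1, hfe]
        simp
      · by_cases hY1 : s(a,b) ∈ inducedEdges G Y
        · have hsub2 : Yf.filter (· ∈ (s(a,b) : Sym2 V)) ⊆ {a, b} := by
            intro v hv
            simp only [Finset.mem_filter, Sym2.mem_iff] at hv
            simp only [Finset.mem_insert, Finset.mem_singleton]
            exact hv.2
          have h2 := Finset.card_le_card hsub2
          have : ({a, b} : Finset V).card ≤ 2 := Finset.card_insert_le a {b} |>.trans (by simp)
          simp only [if_neg hX1, if_pos hY1]
          omega
        · have hax : a ∈ X ∨ b ∈ X := by
            by_contra hc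
            push_neg at hc
            refine hY1 ⟨he, fun v hv => ?_⟩
            rcases Sym2.mem_iff.mp hv with rfl | rfl
            exacts [hc.1, hc.2]
          simp only [if_neg hX1, if_neg hY1]
          rcases hax with hax | hax
          · have hsub2 : Yf.filter (· ∈ (s(a,b) : Sym2 V)) ⊆ {b} := by
              intro v hv
              simp only [Finset.mem_filter, Sym2.mem_iff] at hv
              rcases hv.2 with rfl | rfl
              · exact absurd hax (Set.mem_toFinset.mp hv.1)
              · simp
            simpa using Finset.card_le_card hsub2
          · have hsub2 : Yf.filter (· ∈ (s(a,b) : Sym2 V)) ⊆ {a} := by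
              intro v hv
              simp only [Finset.mem_filter, Sym2.mem_iff] at hv
              rcases hv.2 with rfl | rfl
              · simp
              · exact absurd hax (Set.mem_toFinset.mp hv.1)
            simpa using Finset.card_le_card hsub2
  have hsum2 : ∑ e ∈ G.edgeFinset, (Yf.filter (· ∈ e)).card ≤
      (G.edgeFinset.filter (· ∉ inducedEdges G X)).card
        + (G.edgeFinset.filter (· ∈ inducedEdges G Y)).card := by
    calc _ ≤ ∑ e ∈ G.edgeFinset, ((if e ∈ inducedEdges G X then 0 else 1)
            + (if e ∈ inducedEdges G Y then 1 else 0)) := Finset.sum_le_sum hperedge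
    _ = _ := by
        rw [Finset.sum_add_distrib]
        simp only [Finset.card_filter, ite_not]
  -- filter cardinalities
  have hEcard : G.edgeSet.ncard = G.edgeFinset.card := by
    rw [← Set.ncard_coe_finset, SimpleGraph.coe_edgeFinset]
  have hfX : (G.edgeFinset.filter (· ∈ inducedEdges G X)).card = (inducedEdges G X).ncard := by
    rw [← Set.ncard_coe_finset]
    congr 1
    ext e
    simp only [Finset.coe_filter, SimpleGraph.mem_edgeFinset, Set.mem_setOf_eq]
    exact ⟨fun h => h.2, fun h => ⟨h.1, h⟩⟩
  have hfY : (G.edgeFinset.filter (· ∈ inducedEdges G Y)).card = (inducedEdges G Y).ncard := by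
    rw [← Set.ncard_coe_finset]
    congr 1
    ext e
    simp only [Finset.coe_filter, SimpleGraph.mem_edgeFinset, Set.mem_setOf_eq]
    exact ⟨fun h => h.2, fun h => ⟨h.1, h⟩⟩
  have hfsplit := Finset.card_filter_add_card_filter_not
    (s := G.edgeFinset) (p := (· ∈ inducedEdges G X))
  have hiY : inducedEdges G Y = ∅ ∨ (inducedEdges G Y).ncard + 2 ≤ 2 * Y.ncard := by
    rcases (inducedEdges G Y).eq_empty_or_nonempty with h0 | hne
    · exact Or.inl h0
    · right
      have hproper : (iSub G Y).verts ≠ Set.univ ∨ (iSub G Y).edgeSet ≠ G.edgeSet := by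
        left
        intro hu
        obtain ⟨x, hx⟩ := hXne
        have : x ∈ (iSub G Y).verts := hu ▸ Set.mem_univ x
        exact this hx
      have := hsub (iSub G Y) hproper (by rwa [iSub_edgeSet])
      rwa [iSub_edgeSet] at this
  have hiY0 : (inducedEdges G Y).ncard = 0 ∨ (inducedEdges G Y).ncard + 2 ≤ 2 * Y.ncard := by
    rcases hiY with h | h
    · left; simp [h]
    · exact Or.inr h
  have hXY : X.ncard + Y.ncard = Fintype.card V := by
    have := Set.ncard_add_ncard_compl X
    simpa [Nat.card_eq_fintype_card] using this
  have hm1 : 1 ≤ Y.ncard := by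
    rw [Nat.one_le_iff_ne_zero, ← Nat.pos_iff_ne_zero]
    exact Set.ncard_pos (Set.toFinite _) |>.mpr hYne
  have hYfcard : Y.ncard = Yf.card := by
    rw [← Set.ncard_coe_finset, hYfdef, Set.coe_toFinset]
  omega
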